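/- Let S be a finite set of points in the plane with distinct x-coordinates, let p_min and p_max be the points of S with minimum and maximum x-coordinate, respectively. Then every vertex of the convex hull of S lies on or above the segment [p_min, p_max] or on or below it, the vertices weakly above form the upper hull (a convex chain from p_min to p_max along which every point of S lies weakly below each edge's supporting line), the vertices weakly below form the lower hull, and the two chains intersect exactly in {p_min, p_max} (assuming no point of S other than p_min, p_max lies on the segment [p_min, p_max]). -/

import Mathlib

/-- `p` lies weakly below the line `y = α x + β`. -/
def BelowLine (α β : ℝ) (p : ℝ × ℝ) : Prop := p.2 ≤ α * p.1 + β

/-- `p` lies weakly above the line `y = α x + β`. -/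
def AboveLine (α β : ℝ) (p : ℝ × ℝ) : Prop := α * p.1 + β ≤ p.2

/-- `p` lies on the line `y = α x + β`. -/
def OnLine (α β : ℝ) (p : ℝ × ℝ) : Prop := p.2 = α * p.1 + β

/-- `v` is an extreme point (vertex) of the convex hull of `S`. -/
def IsHullVertex (S : Set (ℝ × ℝ)) (v : ℝ × ℝ) : Prop :=
  v ∈ S ∧ v ∉ convexHull ℝ (S \ {v})

/-- `v` is a vertex of the upper hull of `S`. -/
def IsUpperVertex (S : Set (ℝ × ℝ)) (v : ℝ × ℝ) : Prop :=
  IsHullVertex S v ∧ ∃ α β : ℝ, OnLine α β v ∧ ∀ p ∈ S, BelowLine α β p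

/-- `v` is a vertex of the lower hull of `S`. -/
def IsLowerVertex (S : Set (ℝ × ℝ)) (v : ℝ × ℝ) : Prop :=
  IsHullVertex S v ∧ ∃ α β : ℝ, OnLine α β v ∧ ∀ p ∈ S, AboveLine α β p

/- ### Auxiliary lemmas -/

lemma exists_line_left (S : Finset (ℝ × ℝ)) (v : ℝ × ℝ)
    (h : ∀ p ∈ (S : Set (ℝ × ℝ)), p ≠ v → v.1 < p.1) :
    (∃ a b : ℝ, OnLine a b v ∧ ∀ p ∈ (S : Set (ℝ × ℝ)), BelowLine a b p) ∧
    (∃ a b : ℝ, OnLine a b v ∧ ∀ p ∈ (S : Set (ℝ × ℝ)), AboveLine a b p) := by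
  obtain ⟨M, hM⟩ := (S.finite_toSet.image (fun p => (p.2 - v.2) / (p.1 - v.1))).bddAbove
  obtain ⟨m, hm⟩ := (S.finite_toSet.image (fun p => (p.2 - v.2) / (p.1 - v.1))).bddBelow
  constructor
  · refine ⟨M, v.2 - M * v.1, by unfold OnLine; ring, fun p hp => ?_⟩
    unfold BelowLine
    by_cases hpv : p = v
    · subst hpv; linarith
    · have hd : 0 < p.1 - v.1 := by have := h p hp hpv; linarith
      have hr : (p.2 - v.2) / (p.1 - v.1) ≤ M := hM ⟨p, hp, rfl⟩
      rw [div_le_iff₀ hd] at hr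
      nlinarith
  · refine ⟨m, v.2 - m * v.1, by unfold OnLine; ring, fun p hp => ?_⟩
    unfold AboveLine
    by_cases hpv : p = v
    · subst hpv; linarith
    · have hd : 0 < p.1 - v.1 := by have := h p hp hpv; linarith
      have hr : m ≤ (p.2 - v.2) / (p.1 - v.1) := hm ⟨p, hp, rfl⟩
      rw [le_div_iff₀ hd] at hr
      nlinarith

lemma exists_line_right (S : Finset (ℝ × ℝ)) (v : ℝ × ℝ)
    (h : ∀ p ∈ (S : Set (ℝ × ℝ)), p ≠ v → p.1 < v.1) :
    (∃ a b : ℝ, OnLine a b v ∧ ∀ p ∈ (S : Set (ℝ × ℝ)), BelowLine a b p) ∧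
    (∃ a b : ℝ, OnLine a b v ∧ ∀ p ∈ (S : Set (ℝ × ℝ)), AboveLine a b p) := by
  obtain ⟨M, hM⟩ := (S.finite_toSet.image (fun p => (p.2 - v.2) / (p.1 - v.1))).bddAbove
  obtain ⟨m, hm⟩ := (S.finite_toSet.image (fun p => (p.2 - v.2) / (p.1 - v.1))).bddBelow
  constructor
  · refine ⟨m, v.2 - m * v.1, by unfold OnLine; ring, fun p hp => ?_⟩
    unfold BelowLine
    by_cases hpv : p = v
    · subst hpv; linarith
    · have hd : p.1 - v.1 < 0 := by have := h p hp hpv; linarith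
      have hr : m ≤ (p.2 - v.2) / (p.1 - v.1) := hm ⟨p, hp, rfl⟩
      rw [le_div_iff_of_neg hd] at hr
      nlinarith
  · refine ⟨M, v.2 - M * v.1, by unfold OnLine; ring, fun p hp => ?_⟩
    unfold AboveLine
    by_cases hpv : p = v
    · subst hpv; linarith
    · have hd : p.1 - v.1 < 0 := by have := h p hp hpv; linarith
      have hr : (p.2 - v.2) / (p.1 - v.1) ≤ M := hM ⟨p, hp, rfl⟩
      rw [div_le_iff_of_neg hd] at hr
      nlinarith

lemma sep_vertex (S : Finset (ℝ × ℝ)) (v : ℝ × ℝ)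
    (hv : IsHullVertex (S : Set (ℝ × ℝ)) v) :
    ∃ a b : ℝ, ∀ p ∈ (S : Set (ℝ × ℝ)), p ≠ v →
      a * v.1 + b * v.2 < a * p.1 + b * p.2 := by
  have hfin : ((S : Set (ℝ × ℝ)) \ {v}).Finite := S.finite_toSet.sdiff
  obtain ⟨f, u, hfu, hub⟩ := geometric_hahn_banach_point_closed
    (convex_convexHull ℝ _) (hfin.isCompact_convexHull ℝ).isClosed hv.2
  have key : ∀ q : ℝ × ℝ, f q = f (1, 0) * q.1 + f (0, 1) * q.2 := by
    intro q
    have hq : q.1 • ((1 : ℝ), (0 : ℝ)) + q.2 • ((0 : ℝ), (1 : ℝ)) = q := by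
      ext <;> simp
    conv_lhs => rw [← hq]
    rw [map_add, map_smul, map_smul]
    simp [smul_eq_mul]
    ring
  refine ⟨f (1, 0), f (0, 1), fun p hp hpv => ?_⟩
  have hps : p ∈ convexHull ℝ ((S : Set (ℝ × ℝ)) \ {v}) :=
    subset_convexHull ℝ _ ⟨hp, by simpa using hpv⟩
  have h1 := hfu
  have h2 := hub p hps
  rw [key v] at h1
  rw [key p] at h2
  linarith

lemma sep_to_upper (S : Finset (ℝ × ℝ)) (v : ℝ × ℝ) (hv : v ∈ (S : Set (ℝ × ℝ)))
    (a b : ℝ) (hb : b < 0)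
    (hsep : ∀ p ∈ (S : Set (ℝ × ℝ)), p ≠ v → a * v.1 + b * v.2 < a * p.1 + b * p.2) :
    ∃ a' b' : ℝ, OnLine a' b' v ∧ ∀ p ∈ (S : Set (ℝ × ℝ)), BelowLine a' b' p := by
  have hb' : 0 < -b := by linarith
  refine ⟨a / (-b), v.2 - a / (-b) * v.1, by unfold OnLine; ring, fun p hp => ?_⟩
  unfold BelowLine
  by_cases hpv : p = v
  · subst hpv; linarith
  · have h1 : (p.2 - v.2) * (-b) ≤ a * (p.1 - v.1) := by
      have := hsep p hp hpv; nlinarith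
    have h2 : p.2 - v.2 ≤ a * (p.1 - v.1) / (-b) := (le_div_iff₀ hb').mpr h1
    have h3 : a * (p.1 - v.1) / (-b) = a / (-b) * p.1 - a / (-b) * v.1 := by ring
    rw [h3] at h2
    linarith

lemma sep_to_lower (S : Finset (ℝ × ℝ)) (v : ℝ × ℝ) (hv : v ∈ (S : Set (ℝ × ℝ)))
    (a b : ℝ) (hb : 0 < b)
    (hsep : ∀ p ∈ (S : Set (ℝ × ℝ)), p ≠ v → a * v.1 + b * v.2 < a * p.1 + b * p.2) :
    ∃ a' b' : ℝ, OnLine a' b' v ∧ ∀ p ∈ (S : Set (ℝ × ℝ)), AboveLine a' b' p := by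
  refine ⟨-(a / b), v.2 + a / b * v.1, by unfold OnLine; ring, fun p hp => ?_⟩
  unfold AboveLine
  by_cases hpv : p = v
  · subst hpv; linarith
  · have h1 : (v.2 - p.2) * b ≤ a * (p.1 - v.1) := by
      have := hsep p hp hpv; nlinarith
    have h2 : v.2 - p.2 ≤ a * (p.1 - v.1) / b := (le_div_iff₀ hb).mpr h1
    have h3 : a * (p.1 - v.1) / b = a / b * p.1 - a / b * v.1 := by ring
    rw [h3] at h2
    linarith

lemma seg_param (pmin pmax v : ℝ × ℝ) (hlt : pmin.1 < pmax.1)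
    (h1 : pmin.1 ≤ v.1) (h2 : v.1 ≤ pmax.1) :
    ∃ t : ℝ, 0 ≤ t ∧ t ≤ 1 ∧ (1 - t) * pmin.1 + t * pmax.1 = v.1 := by
  have hne : pmax.1 - pmin.1 ≠ 0 := sub_ne_zero.mpr hlt.ne'
  refine ⟨(v.1 - pmin.1) / (pmax.1 - pmin.1),
    div_nonneg (by linarith) (by linarith), ?_, ?_⟩
  · rw [div_le_one (by linarith)]; linarith
  · field_simp
    ring

lemma seg_y_le (pmin pmax v : ℝ × ℝ) (hlt : pmin.1 < pmax.1)
    (h1 : pmin.1 ≤ v.1) (h2 : v.1 ≤ pmax.1) (α β a' b' : ℝ)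
    (hminl : OnLine α β pmin) (hmaxl : OnLine α β pmax)
    (hv : OnLine a' b' v) (hbmin : BelowLine a' b' pmin) (hbmax : BelowLine a' b' pmax) :
    α * v.1 + β ≤ v.2 := by
  obtain ⟨t, ht0, ht1, hx⟩ := seg_param pmin pmax v hlt h1 h2
  have e1 : α * v.1 + β = (1 - t) * pmin.2 + t * pmax.2 := by
    rw [hminl, hmaxl, ← hx]; ring
  have hb1 : pmin.2 ≤ a' * pmin.1 + b' := hbmin
  have hb2 : pmax.2 ≤ a' * pmax.1 + b' := hbmax
  have e2 : (1 - t) * pmin.2 + t * pmax.2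
      ≤ (1 - t) * (a' * pmin.1 + b') + t * (a' * pmax.1 + b') :=
    add_le_add (mul_le_mul_of_nonneg_left hb1 (by linarith))
      (mul_le_mul_of_nonneg_left hb2 ht0)
  have e3 : (1 - t) * (a' * pmin.1 + b') + t * (a' * pmax.1 + b') = a' * v.1 + b' := by
    rw [← hx]; ring
  have e4 : a' * v.1 + b' = v.2 := hv.symm
  linarith

lemma seg_y_ge (pmin pmax v : ℝ × ℝ) (hlt : pmin.1 < pmax.1)
    (h1 : pmin.1 ≤ v.1) (h2 : v.1 ≤ pmax.1) (α β a' b' : ℝ)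
    (hminl : OnLine α β pmin) (hmaxl : OnLine α β pmax)
    (hv : OnLine a' b' v) (hamin : AboveLine a' b' pmin) (hamax : AboveLine a' b' pmax) :
    v.2 ≤ α * v.1 + β := by
  obtain ⟨t, ht0, ht1, hx⟩ := seg_param pmin pmax v hlt h1 h2
  have e1 : α * v.1 + β = (1 - t) * pmin.2 + t * pmax.2 := by
    rw [hminl, hmaxl, ← hx]; ring
  have hb1 : a' * pmin.1 + b' ≤ pmin.2 := hamin
  have hb2 : a' * pmax.1 + b' ≤ pmax.2 := hamax
  have e2 : (1 - t) * (a' * pmin.1 + b') + t * (a' * pmax.1 + b')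
      ≤ (1 - t) * pmin.2 + t * pmax.2 :=
    add_le_add (mul_le_mul_of_nonneg_left hb1 (by linarith))
      (mul_le_mul_of_nonneg_left hb2 ht0)
  have e3 : (1 - t) * (a' * pmin.1 + b') + t * (a' * pmax.1 + b') = a' * v.1 + b' := by
    rw [← hx]; ring
  have e4 : a' * v.1 + b' = v.2 := hv.symm
  linarith

lemma mem_seg_of_online (pmin pmax v : ℝ × ℝ) (hlt : pmin.1 < pmax.1)
    (h1 : pmin.1 ≤ v.1) (h2 : v.1 ≤ pmax.1) (α β : ℝ)
    (hminl : OnLine α β pmin) (hmaxl : OnLine α β pmax) (hv : OnLine α β v) :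
    v ∈ segment ℝ pmin pmax := by
  obtain ⟨t, ht0, ht1, hx⟩ := seg_param pmin pmax v hlt h1 h2
  have hy : (1 - t) * pmin.2 + t * pmax.2 = v.2 := by
    rw [hminl, hmaxl, hv, ← hx]; ring
  exact ⟨1 - t, t, by linarith, ht0, by ring,
    Prod.ext (by simpa using hx) (by simpa using hy)⟩

/- ### Main theorem -/

theorem upper_lower_hull_decomposition (S : Finset (ℝ × ℝ)) (hcard : 2 ≤ S.card)
    (hinj : Set.InjOn Prod.fst (S : Set (ℝ × ℝ)))
    (pmin pmax : ℝ × ℝ) (hpmin : pmin ∈ S) (hpmax : pmax ∈ S)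
    (hmin : ∀ p ∈ S, pmin.1 ≤ p.1) (hmax : ∀ p ∈ S, p.1 ≤ pmax.1)
    (α β : ℝ) (hminline : OnLine α β pmin) (hmaxline : OnLine α β pmax)
    (hnoother : ∀ p ∈ S, p ∈ segment ℝ pmin pmax → p = pmin ∨ p = pmax) :
    (∀ v, IsHullVertex (S : Set (ℝ × ℝ)) v → AboveLine α β v ∨ BelowLine α β v) ∧
    {v | IsHullVertex (S : Set (ℝ × ℝ)) v ∧ AboveLine α β v}
      = {v | IsUpperVertex (S : Set (ℝ × ℝ)) v} ∧
    {v | IsHullVertex (S : Set (ℝ × ℝ)) v ∧ BelowLine α β v}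
      = {v | IsLowerVertex (S : Set (ℝ × ℝ)) v} ∧
    {v | IsUpperVertex (S : Set (ℝ × ℝ)) v} ∩ {v | IsLowerVertex (S : Set (ℝ × ℝ)) v}
      = {pmin, pmax} := by
  classical
  have hpmin' : pmin ∈ (S : Set (ℝ × ℝ)) := hpmin
  have hpmax' : pmax ∈ (S : Set (ℝ × ℝ)) := hpmax
  have hlt : pmin.1 < pmax.1 := by
    obtain ⟨x, hx, y, hy, hxy⟩ := Finset.one_lt_card.mp hcard
    by_contra h
    push_neg at h
    have hx1 : x.1 = pmin.1 := le_antisymm (le_trans (hmax x hx) h) (hmin x hx)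
    have hy1 : y.1 = pmin.1 := le_antisymm (le_trans (hmax y hy) h) (hmin y hy)
    exact hxy (hinj hx hy (hx1.trans hy1.symm))
  have hendmin : ∀ p ∈ (S : Set (ℝ × ℝ)), p ≠ pmin → pmin.1 < p.1 := by
    intro p hp hne
    refine lt_of_le_of_ne (hmin p hp) fun h => hne (hinj hp hpmin' h.symm)
  have hendmax : ∀ p ∈ (S : Set (ℝ × ℝ)), p ≠ pmax → p.1 < pmax.1 := by
    intro p hp hne
    refine lt_of_le_of_ne (hmax p hp) fun h => hne (hinj hp hpmax' h)
  have hvertmin : IsHullVertex (S : Set (ℝ × ℝ)) pmin := by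
    refine ⟨hpmin', fun hc => ?_⟩
    have hsub : ((S : Set (ℝ × ℝ)) \ {pmin}) ⊆ {w : ℝ × ℝ | pmin.1 < w.1} := by
      rintro p ⟨hp, hpne⟩
      exact hendmin p hp (by simpa using hpne)
    have hcv : Convex ℝ {w : ℝ × ℝ | pmin.1 < w.1} :=
      convex_halfSpace_gt (LinearMap.fst ℝ ℝ ℝ).isLinear pmin.1
    exact lt_irrefl pmin.1 (convexHull_min hsub hcv hc)
  have hvertmax : IsHullVertex (S : Set (ℝ × ℝ)) pmax := by
    refine ⟨hpmax', fun hc => ?_⟩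
    have hsub : ((S : Set (ℝ × ℝ)) \ {pmax}) ⊆ {w : ℝ × ℝ | w.1 < pmax.1} := by
      rintro p ⟨hp, hpne⟩
      exact hendmax p hp (by simpa using hpne)
    have hcv : Convex ℝ {w : ℝ × ℝ | w.1 < pmax.1} :=
      convex_halfSpace_lt (LinearMap.fst ℝ ℝ ℝ).isLinear pmax.1
    exact lt_irrefl pmax.1 (convexHull_min hsub hcv hc)
  obtain ⟨humin, hlmin⟩ := exists_line_left S pmin hendmin
  obtain ⟨humax, hlmax⟩ := exists_line_right S pmax hendmax
  have hUpmin : IsUpperVertex (S : Set (ℝ × ℝ)) pmin := ⟨hvertmin, humin⟩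
  have hLpmin : IsLowerVertex (S : Set (ℝ × ℝ)) pmin := ⟨hvertmin, hlmin⟩
  have hUpmax : IsUpperVertex (S : Set (ℝ × ℝ)) pmax := ⟨hvertmax, humax⟩
  have hLpmax : IsLowerVertex (S : Set (ℝ × ℝ)) pmax := ⟨hvertmax, hlmax⟩
  have honseg : ∀ v ∈ (S : Set (ℝ × ℝ)), OnLine α β v → v = pmin ∨ v = pmax := by
    intro v hv hon
    exact hnoother v hv (mem_seg_of_online pmin pmax v hlt (hmin v hv) (hmax v hv)
      α β hminline hmaxline hon)
  -- v ∈ S with a lower support line and weakly above the segment is an endpoint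
  have hforceA : ∀ v ∈ (S : Set (ℝ × ℝ)), AboveLine α β v →
      (∃ a' b' : ℝ, OnLine a' b' v ∧ ∀ p ∈ (S : Set (ℝ × ℝ)), AboveLine a' b' p) →
      v = pmin ∨ v = pmax := by
    rintro v hv hA ⟨a', b', hon, hab⟩
    have h := seg_y_ge pmin pmax v hlt (hmin v hv) (hmax v hv) α β a' b'
      hminline hmaxline hon (hab pmin hpmin') (hab pmax hpmax')
    exact honseg v hv (le_antisymm h hA)
  have hforceB : ∀ v ∈ (S : Set (ℝ × ℝ)), BelowLine α β v →
      (∃ a' b' : ℝ, OnLine a' b' v ∧ ∀ p ∈ (S : Set (ℝ × ℝ)), BelowLine a' b' p) →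
      v = pmin ∨ v = pmax := by
    rintro v hv hB ⟨a', b', hon, hab⟩
    have h := seg_y_le pmin pmax v hlt (hmin v hv) (hmax v hv) α β a' b'
      hminline hmaxline hon (hab pmin hpmin') (hab pmax hpmax')
    exact honseg v hv (le_antisymm hB h)
  -- degenerate separating line: vertical
  have hvert0 : ∀ v ∈ (S : Set (ℝ × ℝ)), ∀ a : ℝ,
      (∀ p ∈ (S : Set (ℝ × ℝ)), p ≠ v → a * v.1 < a * p.1) → v = pmin ∨ v = pmax := by
    intro v hv a hsep
    rcases lt_trichotomy a 0 with ha | ha | ha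
    · right
      by_contra hne
      have := hsep pmax hpmax' fun h => hne h.symm
      have := (mul_lt_mul_left_of_neg ha).mp this
      exact absurd (hmax v hv) (not_le.mpr this)
    · exfalso
      obtain ⟨p, hp, hpv⟩ := Finset.exists_mem_ne hcard v
      have := hsep p hp hpv
      simp [ha] at this
    · left
      by_contra hne
      have := hsep pmin hpmin' fun h => hne h.symm
      have := (mul_lt_mul_iff_right₀ ha).mp this
      exact absurd (hmin v hv) (not_le.mpr this)
  refine ⟨fun v _ => (le_total (α * v.1 + β) v.2).imp id id, ?_, ?_, ?_⟩
  · ext v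
    simp only [Set.mem_setOf_eq]
    constructor
    · rintro ⟨hvert, hA⟩
      obtain ⟨a, b, hsep⟩ := sep_vertex S v hvert
      rcases lt_trichotomy b 0 with hb | hb | hb
      · exact ⟨hvert, sep_to_upper S v hvert.1 a b hb hsep⟩
      · subst hb
        have hsep' : ∀ p ∈ (S : Set (ℝ × ℝ)), p ≠ v → a * v.1 < a * p.1 := by
          intro p hp hpv
          have := hsep p hp hpv
          simpa using this
        rcases hvert0 v hvert.1 a hsep' with rfl | rfl
        · exact hUpmin
        · exact hUpmax
      · have hlow := sep_to_lower S v hvert.1 a b hb hsep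
        rcases hforceA v hvert.1 hA hlow with rfl | rfl
        · exact hUpmin
        · exact hUpmax
    · rintro ⟨hvert, a', b', hon, hbel⟩
      exact ⟨hvert, seg_y_le pmin pmax v hlt (hmin v hvert.1) (hmax v hvert.1)
        α β a' b' hminline hmaxline hon (hbel pmin hpmin') (hbel pmax hpmax')⟩
  · ext v
    simp only [Set.mem_setOf_eq]
    constructor
    · rintro ⟨hvert, hB⟩
      obtain ⟨a, b, hsep⟩ := sep_vertex S v hvert
      rcases lt_trichotomy b 0 with hb | hb | hb
      · have hup := sep_to_upper S v hvert.1 a b hb hsep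
        rcases hforceB v hvert.1 hB hup with rfl | rfl
        · exact hLpmin
        · exact hLpmax
      · subst hb
        have hsep' : ∀ p ∈ (S : Set (ℝ × ℝ)), p ≠ v → a * v.1 < a * p.1 := by
          intro p hp hpv
          have := hsep p hp hpv
          simpa using this
        rcases hvert0 v hvert.1 a hsep' with rfl | rfl
        · exact hLpmin
        · exact hLpmax
      · exact ⟨hvert, sep_to_lower S v hvert.1 a b hb hsep⟩
    · rintro ⟨hvert, a', b', hon, habv⟩
      exact ⟨hvert, seg_y_ge pmin pmax v hlt (hmin v hvert.1) (hmax v hvert.1)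
        α β a' b' hminline hmaxline hon (habv pmin hpmin') (habv pmax hpmax')⟩
  · ext v
    simp only [Set.mem_inter_iff, Set.mem_setOf_eq, Set.mem_insert_iff,
      Set.mem_singleton_iff]
    constructor
    · rintro ⟨⟨hvert, a1, b1, hon1, hb1⟩, ⟨_, a2, b2, hon2, hb2⟩⟩
      have hle := seg_y_le pmin pmax v hlt (hmin v hvert.1) (hmax v hvert.1)
        α β a1 b1 hminline hmaxline hon1 (hb1 pmin hpmin') (hb1 pmax hpmax')
      have hge := seg_y_ge pmin pmax v hlt (hmin v hvert.1) (hmax v hvert.1)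
        α β a2 b2 hminline hmaxline hon2 (hb2 pmin hpmin') (hb2 pmax hpmax')
      exact honseg v hvert.1 (le_antisymm hge hle)
    · rintro (rfl | rfl)
      exacts [⟨hUpmin, hLpmin⟩, ⟨hUpmax, hLpmax⟩]
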